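/- (Audenaert inequality specialization) For density matrices $\rho, \hat{\rho} \in \mathbb{C}^{d \times d}$, $1 - \mathrm{Tr}(\sqrt{\hat{\rho}} \sqrt{\rho}) \le \tfrac{1}{2} \mathrm{Tr}(|\hat{\rho} - \rho|)$, where $|X| = \sqrt{X^\dagger X}$. -/

import Mathlib

open Matrix ComplexOrder

/-- `Matrix.PosSemidef.sqrt`, removed from Mathlib, restated with its old definition. -/
noncomputable def Matrix.PosSemidef.sqrt {n 𝕜 : Type*} [Fintype n] [RCLike 𝕜] [DecidableEq n]
    {A : Matrix n n 𝕜} (hA : A.PosSemidef) : Matrix n n 𝕜 :=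
  hA.1.eigenvectorUnitary.1 * diagonal ((↑) ∘ (√·) ∘ hA.1.eigenvalues) *
  (star hA.1.eigenvectorUnitary : Matrix n n 𝕜)

/-- The absolute value `|X| = √(Xᴴ X)` of a complex matrix. -/
noncomputable def matrixAbs {d : ℕ} (X : Matrix (Fin d) (Fin d) ℂ) : Matrix (Fin d) (Fin d) ℂ :=
  (Matrix.posSemidef_conjTranspose_mul_self X).sqrt

namespace Matrix.PosSemidef

open scoped MatrixOrder in
lemma sqrt_eq_cfcSqrt {d : ℕ} {A : Matrix (Fin d) (Fin d) ℂ} (hA : A.PosSemidef) :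
    hA.sqrt = CFC.sqrt A := by
  rw [CFC.sqrt_eq_cfc, cfc_nnreal_eq_real _ A hA.nonneg, hA.1.cfc_eq]
  simp only [IsHermitian.cfc, Unitary.conjStarAlgAut_apply, Matrix.PosSemidef.sqrt]
  have hs : (fun x : ℝ => ((NNReal.sqrt x.toNNReal : ℝ))) = fun x => √x := by
    funext x
    rw [Real.coe_sqrt, Real.coe_toNNReal']
    rcases le_total 0 x with h | h
    · rw [max_eq_left h]
    · rw [max_eq_right h, Real.sqrt_zero, Real.sqrt_eq_zero_of_nonpos h]
  rw [hs]

open scoped MatrixOrder in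
lemma sqrt_mul_self {d : ℕ} {A : Matrix (Fin d) (Fin d) ℂ} (hA : A.PosSemidef) :
    hA.sqrt * hA.sqrt = A := by
  rw [sqrt_eq_cfcSqrt]
  exact CFC.sqrt_mul_sqrt_self A hA.nonneg

open scoped MatrixOrder in
lemma posSemidef_sqrt {d : ℕ} {A : Matrix (Fin d) (Fin d) ℂ} (hA : A.PosSemidef) :
    hA.sqrt.PosSemidef := by
  rw [sqrt_eq_cfcSqrt]
  exact (CFC.sqrt_nonneg A).posSemidef

open scoped MatrixOrder in
lemma eq_sqrt_of_sq_eq {d : ℕ} {B : Matrix (Fin d) (Fin d) ℂ} (hB : B.PosSemidef)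
    (A : Matrix (Fin d) (Fin d) ℂ) (h : B ^ 2 = A) : B = (h ▸ hB.pow 2 : A.PosSemidef).sqrt := by
  rw [sqrt_eq_cfcSqrt]
  exact (CFC.sqrt_unique (by rw [← sq]; exact h) hB.nonneg).symm

end Matrix.PosSemidef

namespace AudenaertAux

variable {d : ℕ}

lemma trace_nonneg {A : Matrix (Fin d) (Fin d) ℂ} (hA : A.PosSemidef) : 0 ≤ A.trace := by
  rw [Matrix.trace]
  refine Finset.sum_nonneg fun i _ => ?_
  exact hA.diag_nonneg

lemma trace_mul_nonneg {A B : Matrix (Fin d) (Fin d) ℂ}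
    (hA : A.PosSemidef) (hB : B.PosSemidef) : 0 ≤ (A * B).trace := by
  have h : A * B = hA.sqrt * (hA.sqrt * B) := by
    rw [← mul_assoc, hA.sqrt_mul_self]
  rw [h, trace_mul_comm]
  refine trace_nonneg ?_
  have h2 := hB.mul_mul_conjTranspose_same hA.sqrt
  rwa [hA.posSemidef_sqrt.1.eq] at h2

/-- Conjugation of `diagonal (f ∘ eigenvalues)` by the eigenvector unitary of `A`. -/
noncomputable def fab {A : Matrix (Fin d) (Fin d) ℂ} (hA : A.IsHermitian) (f : ℝ → ℝ) :
    Matrix (Fin d) (Fin d) ℂ :=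
  (hA.eigenvectorUnitary : Matrix (Fin d) (Fin d) ℂ)
    * diagonal (fun i => (f (hA.eigenvalues i) : ℂ))
    * star (hA.eigenvectorUnitary : Matrix (Fin d) (Fin d) ℂ)

variable {A : Matrix (Fin d) (Fin d) ℂ} (hA : A.IsHermitian)

lemma fab_congr {f g : ℝ → ℝ} (h : f = g) : fab hA f = fab hA g := by rw [h]

lemma fab_id : fab hA (fun x => x) = A := by
  conv_rhs => rw [hA.spectral_theorem]
  rfl

lemma fab_mul_fab (f g : ℝ → ℝ) :
    fab hA f * fab hA g = fab hA (fun x => f x * g x) := by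
  unfold fab
  simp only [mul_assoc]
  rw [← mul_assoc (star _) ((hA.eigenvectorUnitary : Matrix (Fin d) (Fin d) ℂ)) _,
    Unitary.coe_star_mul_self, one_mul, ← mul_assoc (diagonal _) (diagonal _) _,
    diagonal_mul_diagonal]
  congr 2
  funext i
  push_cast
  ring

lemma fab_add (f g : ℝ → ℝ) :
    fab hA f + fab hA g = fab hA (fun x => f x + g x) := by
  unfold fab
  rw [← add_mul, ← mul_add, diagonal_add]
  congr 2
  funext i
  push_cast
  ring

lemma fab_sub (f g : ℝ → ℝ) :
    fab hA f - fab hA g = fab hA (fun x => f x - g x) := by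
  unfold fab
  rw [← sub_mul, ← mul_sub, diagonal_sub]
  congr 2
  funext i
  push_cast
  ring

lemma fab_one : fab hA (fun _ => 1) = 1 := by
  unfold fab
  have h1 : (diagonal (fun _ => ((1 : ℝ) : ℂ)) : Matrix (Fin d) (Fin d) ℂ) = 1 := by
    simp [diagonal_one]
  rw [h1, mul_one, ← Unitary.coe_star, Unitary.coe_mul_star_self]

lemma fab_posSemidef {f : ℝ → ℝ} (hf : ∀ x, 0 ≤ f x) : (fab hA f).PosSemidef := by
  have hd : (diagonal (fun i => (f (hA.eigenvalues i) : ℂ))).PosSemidef := by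
    refine posSemidef_diagonal_iff.mpr fun i => ?_
    rw [Complex.zero_le_real]
    exact hf _
  have := hd.mul_mul_conjTranspose_same (hA.eigenvectorUnitary : Matrix (Fin d) (Fin d) ℂ)
  rwa [← star_eq_conjTranspose] at this

end AudenaertAux

open AudenaertAux

set_option maxHeartbeats 1000000 in
/-- Audenaert inequality specialization: for density matrices `ρ, ρ̂`,
`1 - Tr(√ρ̂ √ρ) ≤ ½ Tr(|ρ̂ - ρ|)`. -/
theorem audenaert_specialization (d : ℕ) (ρ ρhat : Matrix (Fin d) (Fin d) ℂ)
    (hρ : ρ.PosSemidef) (hρtr : ρ.trace = 1)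
    (hρhat : ρhat.PosSemidef) (hρhattr : ρhat.trace = 1) :
    1 - (hρhat.sqrt * hρ.sqrt).trace ≤ (1 / 2 : ℂ) * (matrixAbs (ρhat - ρ)).trace := by
  set P := hρhat.sqrt with hPdef
  set Q := hρ.sqrt with hQdef
  have hP : P.PosSemidef := hρhat.posSemidef_sqrt
  have hQ : Q.PosSemidef := hρ.posSemidef_sqrt
  have hPP : P * P = ρhat := hρhat.sqrt_mul_self
  have hQQ : Q * Q = ρ := hρ.sqrt_mul_self
  have hΔ : (P - Q).IsHermitian := hP.1.sub hQ.1
  have hX : (ρhat - ρ).IsHermitian := hρhat.1.sub hρ.1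
  -- the functions
  set fpos : ℝ → ℝ := fun x => max x 0 with hfpos
  set fneg : ℝ → ℝ := fun x => max (-x) 0 with hfneg
  set fabs : ℝ → ℝ := fun x => |x| with hfabs
  set fsgn : ℝ → ℝ := fun x => if 0 ≤ x then 1 else -1 with hfsgn
  have hfpos_nonneg : ∀ x, 0 ≤ fpos x := fun x => le_max_right _ _
  have hfneg_nonneg : ∀ x, 0 ≤ fneg x := fun x => le_max_right _ _
  have hfps : (fun x => fpos x - fneg x) = (fun x : ℝ => x) := by
    funext x
    simp only [hfpos, hfneg]
    rcases le_total 0 x with h | h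
    · rw [max_eq_left h, max_eq_right (neg_nonpos.mpr h)]; ring
    · rw [max_eq_right h, max_eq_left (neg_nonneg.mpr h)]; ring
  have hfpa : (fun x => fpos x + fneg x) = fabs := by
    funext x
    simp only [hfpos, hfneg, hfabs]
    rcases le_total 0 x with h | h
    · rw [max_eq_left h, max_eq_right (neg_nonpos.mpr h), abs_of_nonneg h]; ring
    · rw [max_eq_right h, max_eq_left (neg_nonneg.mpr h), abs_of_nonpos h]; ring
  have hfsa : (fun x => fsgn x * x) = fabs := by
    funext x
    simp only [hfsgn, hfabs]
    rcases le_or_gt 0 x with h | h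
    · rw [if_pos h, abs_of_nonneg h, one_mul]
    · rw [if_neg (not_le.mpr h), abs_of_neg h]; ring
  have hfas : (fun x : ℝ => x * fsgn x) = fabs := by
    funext x
    simp only [hfsgn, hfabs]
    rcases le_or_gt 0 x with h | h
    · rw [if_pos h, abs_of_nonneg h, mul_one]
    · rw [if_neg (not_le.mpr h), abs_of_neg h]; ring
  -- decomposition of Δ = P - Q
  have eΔ : fab hΔ fpos - fab hΔ fneg = P - Q := by
    rw [fab_sub, fab_congr hΔ hfps, fab_id]
  have eabsΔ : fab hΔ fpos + fab hΔ fneg = fab hΔ fabs := by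
    rw [fab_add, fab_congr hΔ hfpa]
  have hSΔ : fab hΔ fsgn * (P - Q) = fab hΔ fabs := by
    conv_lhs => rhs; rw [← fab_id hΔ]
    rw [fab_mul_fab, fab_congr hΔ hfsa]
  have hΔS : (P - Q) * fab hΔ fsgn = fab hΔ fabs := by
    conv_lhs => lhs; rw [← fab_id hΔ]
    rw [fab_mul_fab, fab_congr hΔ hfas]
  -- decomposition of X = ρhat - ρ
  have eX : fab hX fpos - fab hX fneg = ρhat - ρ := by
    rw [fab_sub, fab_congr hX hfps, fab_id]
  have eXabs' : fab hX fpos + fab hX fneg = fab hX fabs := by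
    rw [fab_add, fab_congr hX hfpa]
  have eXabs : matrixAbs (ρhat - ρ) = fab hX fabs := by
    have habs_psd : (fab hX fabs).PosSemidef := fab_posSemidef hX fun x => abs_nonneg x
    have hsq : (fab hX fabs) ^ 2 = (ρhat - ρ)ᴴ * (ρhat - ρ) := by
      rw [sq, fab_mul_fab, hX.eq]
      conv_rhs => rw [← fab_id hX]
      rw [fab_mul_fab]
      exact fab_congr hX (by funext x; simp [hfabs, abs_mul_abs_self])
    exact (habs_psd.eq_sqrt_of_sq_eq _ hsq).symm
  -- abstract algebraic identities
  have gen1 : ∀ Dp Dm Da R S : Matrix (Fin d) (Fin d) ℂ, Dp + Dm = Da → Dp - Dm = R - S →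
      Da * (R + S) - (R - S) * (R - S) = (Dp * S + Dp * S) + (Dm * R + Dm * R) := by
    intro Dp Dm Da R S h1 h2
    rw [← h1]
    nth_rewrite 1 [← h2]
    noncomm_ring
  have gen2 : ∀ Sg Xp Xm Xa X : Matrix (Fin d) (Fin d) ℂ, Xp + Xm = Xa → Xp - Xm = X →
      Xa - Sg * X = (1 - Sg) * Xp + (1 + Sg) * Xm := by
    intro Sg Xp Xm Xa X h1 h2
    rw [← h1, ← h2]
    noncomm_ring
  -- step A : Tr(Δ²) ≤ Tr(|Δ|(P+Q))
  have hA2 : 0 ≤ (fab hΔ fabs * (P + Q)).trace - ((P - Q) * (P - Q)).trace := by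
    have hm := gen1 (fab hΔ fpos) (fab hΔ fneg) (fab hΔ fabs) P Q eabsΔ eΔ
    have h0 : 0 ≤ ((fab hΔ fpos * Q + fab hΔ fpos * Q)
        + (fab hΔ fneg * P + fab hΔ fneg * P)).trace := by
      rw [trace_add, trace_add, trace_add]
      have t1 := trace_mul_nonneg (fab_posSemidef hΔ hfpos_nonneg) hQ
      have t2 := trace_mul_nonneg (fab_posSemidef hΔ hfneg_nonneg) hP
      exact add_nonneg (add_nonneg t1 t1) (add_nonneg t2 t2)
    rwa [← hm, trace_sub] at h0
  -- middle equality : 2 Tr(S X) = 2 Tr(|Δ|(P+Q))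
  have heq : (fab hΔ fsgn * (ρhat - ρ)).trace + (fab hΔ fsgn * (ρhat - ρ)).trace
      = (fab hΔ fabs * (P + Q)).trace + (fab hΔ fabs * (P + Q)).trace := by
    have hXX : (ρhat - ρ) + (ρhat - ρ) = (P - Q) * (P + Q) + (P + Q) * (P - Q) := by
      rw [← hPP, ← hQQ]; noncomm_ring
    have lhs_eq : (fab hΔ fsgn * (ρhat - ρ)).trace + (fab hΔ fsgn * (ρhat - ρ)).trace
        = (fab hΔ fsgn * ((P - Q) * (P + Q))).trace
          + (fab hΔ fsgn * ((P + Q) * (P - Q))).trace := by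
      rw [← trace_add, ← mul_add, ← trace_add, ← mul_add, hXX]
    rw [lhs_eq]
    congr 1
    · rw [← mul_assoc, hSΔ]
    · rw [← mul_assoc, trace_mul_comm, ← mul_assoc, hΔS, trace_mul_comm]
  -- step B : Tr(S X) ≤ Tr(|X|)
  have hB : 0 ≤ (fab hX fabs).trace - (fab hΔ fsgn * (ρhat - ρ)).trace := by
    have h1S : (1 - fab hΔ fsgn).PosSemidef := by
      have h := fab_sub hΔ (fun _ => 1) fsgn
      rw [fab_one] at h
      rw [h]
      refine fab_posSemidef hΔ fun x => ?_
      by_cases hx : 0 ≤ x <;> simp [hfsgn, hx]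
    have h2S : (1 + fab hΔ fsgn).PosSemidef := by
      have h := fab_add hΔ (fun _ => 1) fsgn
      rw [fab_one] at h
      rw [h]
      refine fab_posSemidef hΔ fun x => ?_
      by_cases hx : 0 ≤ x <;> simp [hfsgn, hx]
    have hm := gen2 (fab hΔ fsgn) (fab hX fpos) (fab hX fneg) (fab hX fabs) (ρhat - ρ) eXabs' eX
    have h0 : 0 ≤ ((1 - fab hΔ fsgn) * fab hX fpos + (1 + fab hΔ fsgn) * fab hX fneg).trace := by
      rw [trace_add]
      exact add_nonneg (trace_mul_nonneg h1S (fab_posSemidef hX hfpos_nonneg))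
        (trace_mul_nonneg h2S (fab_posSemidef hX hfneg_nonneg))
    rwa [← hm, trace_sub] at h0
  -- trace of Δ²
  have hTr1 : ((P - Q) * (P - Q)).trace = 2 - 2 * (P * Q).trace := by
    have h : (P - Q) * (P - Q) = P * P + Q * Q - (P * Q + Q * P) := by noncomm_ring
    rw [h, trace_sub, trace_add, trace_add, hPP, hQQ, hρtr, hρhattr, trace_mul_comm Q P]
    ring
  -- conclude
  rw [← sub_nonneg]
  have key : (1 / 2 : ℂ) * (matrixAbs (ρhat - ρ)).trace - (1 - (P * Q).trace)
      = (1 / 2 : ℂ) * (((fab hX fabs).trace - (fab hΔ fsgn * (ρhat - ρ)).trace)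
        + ((fab hΔ fabs * (P + Q)).trace - ((P - Q) * (P - Q)).trace)) := by
    rw [eXabs]
    linear_combination heq / 4 + hTr1 / 2
  rw [key]
  have half_nonneg : (0 : ℂ) ≤ 1 / 2 := by
    rw [Complex.le_def]
    norm_num
  exact mul_nonneg half_nonneg (add_nonneg hB hA2)
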